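/- Let P' ⊆ {0,1}^{m+2} be a set of binary points each having at most n−1 nonzero coordinates and whose last two coordinates are zero, and let Δ ≥ 2√n. Then the closed ball of radius √2·Δ centered at the origin contains P' and also contains the four special points p₊₊, p₊₋, p₋₊, p₋₋ (with last two coordinates (±Δ, ±Δ) and other coordinates zero). Moreover, any ball containing all of P ∪ {p₊₊, p₊₋, p₋₊, p₋₋} has radius at least √2·Δ. -/

import Mathlib

/-- The point of `ℝ^{m+2}` whose first `m` coordinates are `0` and whose last two
coordinates are `a` and `b`. -/
noncomputable def specialPt (m : ℕ) (a b : ℝ) : EuclideanSpace ℝ (Fin (m + 2)) :=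
  WithLp.toLp 2 (fun i : Fin (m + 2) => if (i : ℕ) = m then a else if (i : ℕ) = m + 1 then b else 0)

lemma specialPt_norm (m : ℕ) (a b : ℝ) :
    ‖specialPt m a b‖ = Real.sqrt (a ^ 2 + b ^ 2) := by
  rw [EuclideanSpace.norm_eq]
  congr 1
  have key : ∀ i : Fin (m + 2), ‖specialPt m a b i‖ ^ 2 =
      (if i = (⟨m, by omega⟩ : Fin (m + 2)) then a ^ 2 else 0)
      + (if i = (⟨m + 1, by omega⟩ : Fin (m + 2)) then b ^ 2 else 0) := by
    intro i
    simp only [specialPt, PiLp.toLp_apply, Real.norm_eq_abs, sq_abs, Fin.ext_iff]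
    rcases eq_or_ne (i : ℕ) m with h | h <;> rcases eq_or_ne (i : ℕ) (m + 1) with h' | h' <;>
      simp [h, h']
  rw [Finset.sum_congr rfl (fun i _ => key i), Finset.sum_add_distrib,
    Finset.sum_ite_eq' _ _ (fun _ => a ^ 2), Finset.sum_ite_eq' _ _ (fun _ => b ^ 2)]
  simp

lemma specialPt_sub (m : ℕ) (a b c d : ℝ) :
    specialPt m a b - specialPt m c d = specialPt m (a - c) (b - d) := by
  ext i
  show specialPt m a b i - specialPt m c d i = _
  simp only [specialPt, PiLp.toLp_apply]
  split_ifs <;> ring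

/-- The ball `B(0, √2·Δ)` contains all binary points with at most `n−1` ones (and zero last
two coordinates) and the four special points; moreover any ball containing all of them has
radius at least `√2·Δ`. -/
theorem stmt10 (m n : ℕ) (hn : 1 ≤ n) (Δ : ℝ) (hΔ : 2 * Real.sqrt n ≤ Δ)
    (P' : Set (EuclideanSpace ℝ (Fin (m + 2))))
    (hbin : ∀ p ∈ P', ∀ i : Fin (m + 2), p i = 0 ∨ p i = 1)
    (hsparse : ∀ p ∈ P', Set.ncard {i : Fin (m + 2) | p i ≠ 0} ≤ n - 1)
    (hlast : ∀ p ∈ P', ∀ i : Fin (m + 2), m ≤ (i : ℕ) → p i = 0) :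
    P' ⊆ Metric.closedBall 0 (Real.sqrt 2 * Δ) ∧
    (∀ a b : ℝ, (a = Δ ∨ a = -Δ) → (b = Δ ∨ b = -Δ) →
      specialPt m a b ∈ Metric.closedBall 0 (Real.sqrt 2 * Δ)) ∧
    (∀ (c : EuclideanSpace ℝ (Fin (m + 2))) (r : ℝ),
      P' ∪ {specialPt m Δ Δ, specialPt m Δ (-Δ), specialPt m (-Δ) Δ, specialPt m (-Δ) (-Δ)}
        ⊆ Metric.closedBall c r → Real.sqrt 2 * Δ ≤ r) := by
  have hΔ0 : 0 ≤ Δ := le_trans (by positivity) hΔ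
  have hnorm2 : Real.sqrt 2 * Δ = Real.sqrt (2 * Δ ^ 2) := by
    rw [Real.sqrt_mul (by norm_num), Real.sqrt_sq hΔ0]
  refine ⟨?_, ?_, ?_⟩
  · intro p hp
    rw [Metric.mem_closedBall, dist_zero_right, EuclideanSpace.norm_eq, hnorm2]
    apply Real.sqrt_le_sqrt
    have hsum : ∑ i : Fin (m + 2), ‖p i‖ ^ 2
        = (Finset.univ.filter (fun i => p i ≠ 0)).card := by
      rw [Finset.card_eq_sum_ones]
      push_cast
      rw [Finset.sum_filter]
      apply Finset.sum_congr rfl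
      intro i _
      rcases hbin p hp i with h | h <;> simp [h]
    rw [hsum]
    have hcard : (Finset.univ.filter (fun i => p i ≠ 0)).card ≤ n - 1 := by
      have := hsparse p hp
      rwa [Set.ncard_eq_toFinset_card', Set.toFinset_setOf] at this
    have h1 : ((Finset.univ.filter (fun i => p i ≠ 0)).card : ℝ) ≤ n := by
      exact_mod_cast le_trans hcard (Nat.sub_le n 1)
    have hΔ2 : 4 * (n : ℝ) ≤ Δ ^ 2 := by
      nlinarith [Real.sq_sqrt (show (0:ℝ) ≤ (n:ℝ) by positivity), Real.sqrt_nonneg (n : ℝ)]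
    nlinarith [(by exact_mod_cast hn : (1:ℝ) ≤ (n:ℝ))]
  · intro a b ha hb
    rw [Metric.mem_closedBall, dist_zero_right, specialPt_norm, hnorm2]
    have : a ^ 2 + b ^ 2 = 2 * Δ ^ 2 := by
      rcases ha with rfl | rfl <;> rcases hb with rfl | rfl <;> ring
    rw [this]
  · intro c r hsub
    have h1 : specialPt m Δ Δ ∈ Metric.closedBall c r :=
      hsub (Or.inr (by simp))
    have h2 : specialPt m (-Δ) (-Δ) ∈ Metric.closedBall c r :=
      hsub (Or.inr (by simp))
    have hd : dist (specialPt m Δ Δ) (specialPt m (-Δ) (-Δ)) = 2 * (Real.sqrt 2 * Δ) := by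
      rw [dist_eq_norm, specialPt_sub, specialPt_norm]
      rw [show Δ - -Δ = 2 * Δ by ring, show (2*Δ)^2 + (2*Δ)^2 = 4 * (2 * Δ^2) by ring,
        show (4 : ℝ) * (2 * Δ ^ 2) = 2 ^ 2 * (2 * Δ ^ 2) by norm_num,
        Real.sqrt_mul (by norm_num), Real.sqrt_sq (by norm_num : (0:ℝ) ≤ 2)]
      rw [Real.sqrt_mul (by norm_num), Real.sqrt_sq hΔ0]
    have := dist_triangle (specialPt m Δ Δ) c (specialPt m (-Δ) (-Δ))
    rw [hd] at this
    rw [Metric.mem_closedBall] at h1 h2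
    rw [dist_comm] at h2
    linarith
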